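/- A Metzler matrix A ∈ ℝ^{n×n} is Hurwitz if and only if there exists a diagonal matrix P ≻ 0 such that AᵀP + PA ≺ 0. -/

import Mathlib

open Matrix

/-- A square matrix is Metzler if all its off-diagonal entries are nonnegative. -/
def Metzler {n : ℕ} (A : Matrix (Fin n) (Fin n) ℝ) : Prop :=
  ∀ i j, i ≠ j → 0 ≤ A i j

/-- A real matrix is Hurwitz if all its (complex) eigenvalues have negative real part. -/
def Hurwitz {n : ℕ} (A : Matrix (Fin n) (Fin n) ℝ) : Prop :=
  ∀ μ ∈ spectrum ℂ (A.map (algebraMap ℝ ℂ)), μ.re < 0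

section Helpers
open Filter Finset Complex
open scoped ENNReal NNReal Topology

lemma quadform_neg {n : ℕ} (S : Matrix (Fin n) (Fin n) ℝ) (hsym : Sᵀ = S)
    (hoff : ∀ i j, i ≠ j → 0 ≤ S i j) (v : Fin n → ℝ) (hv : ∀ i, 0 < v i)
    (hSv : ∀ i, (S *ᵥ v) i < 0) : ∀ x : Fin n → ℝ, x ≠ 0 → x ⬝ᵥ (S *ᵥ x) < 0 := by
  intro x hx
  have hvne : ∀ i, v i ≠ 0 := fun i => (hv i).ne'
  have hS : ∀ i j, S j i = S i j := fun i j =>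
    show S j i = S i j from (congrFun (congrFun hsym j) i).symm
  set y : Fin n → ℝ := fun i => x i / v i with hy
  have hxy : ∀ i, x i = v i * y i := fun i => by
    rw [hy, mul_comm]; exact (div_mul_cancel₀ (x i) (hvne i)).symm
  have expand : x ⬝ᵥ (S *ᵥ x) = ∑ i, ∑ j, (v i * y i) * (S i j * (v j * y j)) := by
    simp only [dotProduct, mulVec, Finset.mul_sum]
    exact Finset.sum_congr rfl fun i _ => Finset.sum_congr rfl fun j _ => by
      rw [← hxy i, ← hxy j]
  have key : ∀ i j, (v i * y i) * (S i j * (v j * y j)) =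
      (1/2) * (S i j * (v j * v i * y i^2) + S i j * (v i * v j * y j^2))
      - (1/2) * (S i j * (v i * v j * (y i - y j)^2)) := by
    intro i j; ring
  rw [expand]
  simp_rw [key, Finset.sum_sub_distrib]
  have h1 : ∑ i, ∑ j, (1/2) * (S i j * (v j * v i * y i^2) + S i j * (v i * v j * y j^2))
      = ∑ i, (v i * y i ^ 2) * (S *ᵥ v) i := by
    simp_rw [mul_add, Finset.sum_add_distrib]
    have swap : ∑ i, ∑ j, (1/2) * (S i j * (v i * v j * y j^2))
        = ∑ i, ∑ j, (1/2) * (S i j * (v j * v i * y i^2)) := by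
      rw [Finset.sum_comm]
      exact Finset.sum_congr rfl fun i _ => Finset.sum_congr rfl fun j _ => by
        rw [hS i j]
    rw [swap, ← two_mul]
    simp_rw [mulVec, dotProduct, Finset.mul_sum]
    exact Finset.sum_congr rfl fun i _ => Finset.sum_congr rfl fun j _ => by ring
  rw [h1]
  have h2 : 0 ≤ ∑ i, ∑ j, (1/2) * (S i j * (v i * v j * (y i - y j)^2)) := by
    refine Finset.sum_nonneg fun i _ => Finset.sum_nonneg fun j _ => ?_
    rcases eq_or_ne i j with rfl | hij
    · simp
    · have h3 := hoff i j hij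
      have h4 := hv i; have h5 := hv j
      positivity
  have h3 : ∑ i, (v i * y i ^ 2) * (S *ᵥ v) i < 0 := by
    have hxne : ∃ i, y i ≠ 0 := by
      by_contra h
      push_neg at h
      exact hx (funext fun i => by simp [hxy i, h i])
    obtain ⟨i0, hi0⟩ := hxne
    have hlt : ∑ i, (v i * y i ^ 2) * (S *ᵥ v) i < ∑ i : Fin n, (0:ℝ) := by
      refine Finset.sum_lt_sum (fun i _ => ?_) ⟨i0, Finset.mem_univ i0, ?_⟩
      · have h6 := hv i
        have h4 : 0 ≤ v i * y i ^ 2 := by positivity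
        exact mul_nonpos_of_nonneg_of_nonpos h4 (hSv i).le
      · have h6 := hv i0
        have h4 : 0 < v i0 * y i0 ^ 2 := by positivity
        exact mul_neg_of_pos_of_neg h4 (hSv i0)
    rwa [Finset.sum_const_zero] at hlt
  linarith

variable {n : ℕ}

/-- For a real positive definite M and nonzero complex x, x* M x has positive real part and
zero imaginary part. -/
lemma posdef_complex_quad {M : Matrix (Fin n) (Fin n) ℝ} (hM : M.PosDef) (x : Fin n → ℂ)
    (hx : x ≠ 0) :
    0 < (star x ⬝ᵥ ((M.map (algebraMap ℝ ℂ)) *ᵥ x)).re ∧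
      (star x ⬝ᵥ ((M.map (algebraMap ℝ ℂ)) *ᵥ x)).im = 0 := by
  have hsym : ∀ i j, M j i = M i j := fun i j =>
    (congrFun (congrFun hM.1 j) i).symm
  set a : Fin n → ℝ := fun i => (x i).re with ha
  set b : Fin n → ℝ := fun i => (x i).im with hb
  have hexp : star x ⬝ᵥ ((M.map (algebraMap ℝ ℂ)) *ᵥ x)
      = ∑ i, ∑ j, (M i j : ℂ) * (starRingEnd ℂ (x i) * x j) := by
    simp only [dotProduct, mulVec, map_apply, Finset.mul_sum, Pi.star_apply, RCLike.star_def,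
      Complex.coe_algebraMap]
    refine Finset.sum_congr rfl fun i _ => Finset.sum_congr rfl fun j _ => by ring
  have dot_expand : ∀ c : Fin n → ℝ, c ⬝ᵥ (M *ᵥ c) = ∑ i, ∑ j, M i j * (c i * c j) := by
    intro c
    simp only [dotProduct, mulVec, Finset.mul_sum]
    exact Finset.sum_congr rfl fun i _ => Finset.sum_congr rfl fun j _ => by ring
  have hre : (star x ⬝ᵥ ((M.map (algebraMap ℝ ℂ)) *ᵥ x)).re
      = a ⬝ᵥ (M *ᵥ a) + b ⬝ᵥ (M *ᵥ b) := by
    rw [hexp, dot_expand a, dot_expand b]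
    simp only [Complex.re_sum]
    rw [← Finset.sum_add_distrib]
    refine Finset.sum_congr rfl fun i _ => ?_
    rw [← Finset.sum_add_distrib]
    refine Finset.sum_congr rfl fun j _ => ?_
    simp only [Complex.mul_re, Complex.mul_im, Complex.ofReal_re, Complex.ofReal_im, ha, hb,
      RingHom.coe_coe, Complex.conj_re, Complex.conj_im]
    ring
  have him : (star x ⬝ᵥ ((M.map (algebraMap ℝ ℂ)) *ᵥ x)).im = 0 := by
    rw [hexp]
    rw [Complex.im_sum]
    simp only [Complex.im_sum]
    have : ∀ i j, ((M i j : ℂ) * (starRingEnd ℂ (x i) * x j)).im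
        = M i j * (a i * b j) - M i j * (b i * a j) := by
      intro i j
      simp [Complex.mul_im, Complex.mul_re, ha, hb]
      ring
    simp_rw [this, Finset.sum_sub_distrib]
    rw [sub_eq_zero]
    rw [Finset.sum_comm]
    exact Finset.sum_congr rfl fun i _ => Finset.sum_congr rfl fun j _ => by
      rw [hsym i j]; ring
  refine ⟨?_, him⟩
  rw [hre]
  -- at least one of a, b is nonzero
  rcases eq_or_ne a 0 with hA | hA
  · have hB : b ≠ 0 := by
      intro hB
      apply hx
      funext i
      have h1 : a i = 0 := by rw [hA]; rfl
      have h2 : b i = 0 := by rw [hB]; rfl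
      apply Complex.ext <;> simpa [ha, hb] using ‹_›
    have h1 : 0 ≤ a ⬝ᵥ (M *ᵥ a) := by simpa using hM.posSemidef.dotProduct_mulVec_nonneg a
    have h2 : 0 < b ⬝ᵥ (M *ᵥ b) := by simpa using hM.dotProduct_mulVec_pos hB
    linarith
  · have h1 : 0 < a ⬝ᵥ (M *ᵥ a) := by simpa using hM.dotProduct_mulVec_pos hA
    have h2 : 0 ≤ b ⬝ᵥ (M *ᵥ b) := by simpa using hM.posSemidef.dotProduct_mulVec_nonneg b
    linarith

section NormBound
variable {n : ℕ}

attribute [local instance] Matrix.linftyOpNormedRing Matrix.linftyOpNormedAlgebra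

noncomputable local instance : CompleteSpace (Matrix (Fin n) (Fin n) ℂ) :=
  FiniteDimensional.complete ℂ _

lemma entry_nnnorm_le (M : Matrix (Fin n) (Fin n) ℂ) (i j : Fin n) : ‖M i j‖₊ ≤ ‖M‖₊ := by
  rw [Matrix.linfty_opNNNorm_def]
  exact le_trans
    (Finset.single_le_sum (f := fun j => ‖M i j‖₊) (fun _ _ => zero_le) (Finset.mem_univ j))
    (Finset.le_sup (f := fun i => ∑ j : Fin n, ‖M i j‖₊) (Finset.mem_univ i))

lemma pow_entry_bound (B : Matrix (Fin n) (Fin n) ℂ) {r : ℝ≥0}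
    (hr : ∀ μ ∈ spectrum ℂ B, ‖μ‖₊ < r) (hr0 : 0 < r) :
    ∃ K : ℕ, ∀ k ≥ K, ∀ i j, ‖(B ^ k) i j‖ ≤ (r : ℝ) ^ k := by
  have hρ : spectralRadius ℂ B < (r : ℝ≥0∞) := by
    set t := (Matrix.finite_spectrum B).toFinset with ht
    have h1 : spectralRadius ℂ B ≤ ((t.sup fun μ => ‖μ‖₊ : ℝ≥0) : ℝ≥0∞) := by
      rw [spectralRadius]
      refine iSup₂_le fun μ hμ => ?_
      exact_mod_cast ENNReal.coe_le_coe.2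
        (Finset.le_sup ((Matrix.finite_spectrum B).mem_toFinset.2 hμ))
    refine lt_of_le_of_lt h1 ?_
    rw [ENNReal.coe_lt_coe]
    refine (Finset.sup_lt_iff ?_).2 fun μ hμ => hr μ ((Matrix.finite_spectrum B).mem_toFinset.1 hμ)
    simpa using hr0
  have hG := spectrum.pow_nnnorm_pow_one_div_tendsto_nhds_spectralRadius B
  have hev : ∀ᶠ k : ℕ in atTop, (‖B ^ k‖₊ : ℝ≥0∞) ^ (1 / (k:ℝ)) < (r : ℝ≥0∞) :=
    hG.eventually_lt_const hρ
  rw [eventually_atTop] at hev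
  obtain ⟨K, hK⟩ := hev
  refine ⟨K + 1, fun k hk i j => ?_⟩
  have hk1 : 1 ≤ k := le_trans (Nat.le_add_left 1 K) hk
  have hkK : k ≥ K := le_trans (Nat.le_add_right K 1) hk
  have h2 := hK k hkK
  have hkne : (k : ℝ) ≠ 0 := Nat.cast_ne_zero.2 (Nat.one_le_iff_ne_zero.1 hk1)
  have h3 : (‖B ^ k‖₊ : ℝ≥0∞) < (r : ℝ≥0∞) ^ (k : ℝ) := by
    have := ENNReal.rpow_lt_rpow h2 (by positivity : (0:ℝ) < (k:ℝ))
    rwa [← ENNReal.rpow_mul, one_div, inv_mul_cancel₀ hkne, ENNReal.rpow_one] at this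
  have h4 : (‖B ^ k‖₊ : ℝ≥0∞) < ((r ^ k : ℝ≥0) : ℝ≥0∞) := by
    rw [ENNReal.coe_pow, ← ENNReal.rpow_natCast ((r : ℝ≥0∞)) k]
    exact h3
  have h5 : ‖B ^ k‖₊ ≤ r ^ k := by exact_mod_cast h4.le
  have h6 : ‖(B ^ k) i j‖₊ ≤ r ^ k := le_trans (entry_nnnorm_le _ i j) h5
  exact_mod_cast h6
end NormBound

lemma exists_pos_mulVec_neg {n : ℕ} (A : Matrix (Fin n) (Fin n) ℝ) (hA : Metzler A)
    (hH : Hurwitz A) :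
    ∃ v : Fin n → ℝ, (∀ i, 0 < v i) ∧ ∀ i, (A *ᵥ v) i < 0 := by
  classical
  obtain ⟨s, hs0, hdiag, hspec⟩ : ∃ s : ℝ, 0 < s ∧ (∀ i, 0 ≤ A i i + s) ∧
      ∀ μ ∈ spectrum ℂ (A.map (algebraMap ℝ ℂ)), ‖μ + (s:ℂ)‖ < s := by
    set Aℂ := A.map (algebraMap ℝ ℂ) with hAC
    set t := (Matrix.finite_spectrum Aℂ).toFinset with ht
    have hHn : ∀ μ ∈ t, (0:ℝ) < -μ.re := fun μ hμ => by
      have := hH μ ((Matrix.finite_spectrum Aℂ).mem_toFinset.1 hμ)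
      linarith
    have htermnn : ∀ μ ∈ t, 0 ≤ ‖μ‖^2 / (2 * (-μ.re)) := fun μ hμ => by
      have h1 := hHn μ hμ
      positivity
    refine ⟨1 + (∑ i, |A i i|) + ∑ μ ∈ t, ‖μ‖^2 / (2 * (-μ.re)), ?_, ?_, ?_⟩
    · have habs : (0:ℝ) ≤ ∑ i, |A i i| := Finset.sum_nonneg fun i _ => abs_nonneg _
      have hsum2 : (0:ℝ) ≤ ∑ μ ∈ t, ‖μ‖^2 / (2 * (-μ.re)) := Finset.sum_nonneg htermnn
      linarith
    · intro i
      have h1 : |A i i| ≤ ∑ j, |A j j| :=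
        Finset.single_le_sum (f := fun j => |A j j|) (fun j _ => abs_nonneg _) (Finset.mem_univ i)
      have h2 : -A i i ≤ |A i i| := neg_le_abs _
      have hsum2 : (0:ℝ) ≤ ∑ μ ∈ t, ‖μ‖^2 / (2 * (-μ.re)) := Finset.sum_nonneg htermnn
      linarith
    · intro μ hμ
      set S : ℝ := 1 + (∑ i, |A i i|) + ∑ ν ∈ t, ‖ν‖^2 / (2 * (-ν.re)) with hS
      have hmt : μ ∈ t := (Matrix.finite_spectrum Aℂ).mem_toFinset.2 hμ
      have hterm : ‖μ‖^2 / (2 * (-μ.re)) ≤ ∑ ν ∈ t, ‖ν‖^2 / (2 * (-ν.re)) :=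
        Finset.single_le_sum htermnn hmt
      have habs : (0:ℝ) ≤ ∑ i, |A i i| := Finset.sum_nonneg fun i _ => abs_nonneg _
      have hslt : ‖μ‖^2 / (2 * (-μ.re)) < S := by rw [hS]; linarith
      have hre := hHn μ hmt
      have hS0 : 0 < S := by
        have hsum2 : (0:ℝ) ≤ ∑ ν ∈ t, ‖ν‖^2 / (2 * (-ν.re)) := Finset.sum_nonneg htermnn
        rw [hS]; linarith
      have hmu2 : ‖μ‖^2 < 2 * (-μ.re) * S := by
        rw [div_lt_iff₀ (by linarith : (0:ℝ) < 2 * (-μ.re))] at hslt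
        linarith [hslt]
      have hn1 : ‖μ + (S:ℂ)‖^2 = ‖μ‖^2 + 2*S*μ.re + S^2 := by
        rw [Complex.sq_norm, Complex.sq_norm,
          Complex.normSq_apply, Complex.normSq_apply]
        simp only [Complex.add_re, Complex.add_im, Complex.ofReal_re, Complex.ofReal_im]
        ring
      have hsq : ‖μ + (S:ℂ)‖^2 < S^2 := by rw [hn1]; nlinarith
      exact lt_of_pow_lt_pow_left₀ 2 hS0.le hsq
  set B : Matrix (Fin n) (Fin n) ℝ := A + s • 1 with hBdef
  have hB0 : ∀ i j, 0 ≤ B i j := by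
    intro i j
    rcases eq_or_ne i j with rfl | hij
    · simpa [hBdef, Matrix.add_apply, Matrix.smul_apply, Matrix.one_apply] using hdiag i
    · simpa [hBdef, Matrix.add_apply, Matrix.smul_apply, Matrix.one_apply, hij] using hA i j hij
  have hBpow : ∀ k, ∀ i j, 0 ≤ (B ^ k) i j := by
    intro k
    induction k with
    | zero => intro i j; rcases eq_or_ne i j with rfl | hij <;> simp [Matrix.one_apply, *]
    | succ m ih =>
      intro i j
      rw [pow_succ, Matrix.mul_apply]
      exact Finset.sum_nonneg fun l _ => mul_nonneg (ih i l) (hB0 l j)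
  have hBC : B.map (algebraMap ℝ ℂ)
      = algebraMap ℂ (Matrix (Fin n) (Fin n) ℂ) (s : ℂ) + A.map (algebraMap ℝ ℂ) := by
    ext i j
    rcases eq_or_ne i j with rfl | hij
    · simp [hBdef, Matrix.map_apply, Matrix.add_apply, Matrix.smul_apply, Matrix.one_apply,
        Matrix.algebraMap_matrix_apply]
      ring
    · simp [hBdef, Matrix.map_apply, Matrix.add_apply, Matrix.smul_apply, Matrix.one_apply,
        Matrix.algebraMap_matrix_apply, hij]
  have hspecB : ∀ μ' ∈ spectrum ℂ (B.map (algebraMap ℝ ℂ)), ‖μ'‖ < s := by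
    intro μ' hμ'
    rw [hBC] at hμ'
    have h1 : (μ' - (s:ℂ)) + (s:ℂ) ∈ spectrum ℂ
        (algebraMap ℂ (Matrix (Fin n) (Fin n) ℂ) (s : ℂ) + A.map (algebraMap ℝ ℂ)) := by
      simpa [sub_add_cancel] using hμ'
    have h2 := (spectrum.add_mem_add_iff).1 h1
    have h3 := hspec _ h2
    simpa [sub_add_cancel] using h3
  obtain ⟨r, hr0, hrs, hrspec⟩ : ∃ r : ℝ, 0 < r ∧ r < s ∧
      ∀ μ' ∈ spectrum ℂ (B.map (algebraMap ℝ ℂ)), ‖μ'‖ < r := by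
    set t' := (Matrix.finite_spectrum (B.map (algebraMap ℝ ℂ))).toFinset with ht'
    set ρ : ℝ≥0 := t'.sup fun μ => ‖μ‖₊ with hρ
    have hρs : (ρ : ℝ) < s := by
      have h0 : ρ < s.toNNReal := by
        refine (Finset.sup_lt_iff ?_).2 fun μ hμ => ?_
        · simpa using Real.toNNReal_pos.2 hs0
        · have h1 := hspecB μ ((Matrix.finite_spectrum _).mem_toFinset.1 hμ)
          rw [← NNReal.coe_lt_coe, Real.coe_toNNReal _ hs0.le]
          exact h1
      have h2 := NNReal.coe_lt_coe.2 h0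
      rwa [Real.coe_toNNReal _ hs0.le] at h2
    refine ⟨((ρ : ℝ) + s) / 2, by positivity, by linarith, fun μ' hμ' => ?_⟩
    have h1 : ‖μ'‖₊ ≤ ρ :=
      Finset.le_sup (f := fun μ => ‖μ‖₊) ((Matrix.finite_spectrum _).mem_toFinset.2 hμ')
    have h2 : ‖μ'‖ ≤ (ρ : ℝ) := h1
    linarith
  obtain ⟨K, hK⟩ := pow_entry_bound (B.map (algebraMap ℝ ℂ)) (r := r.toNNReal)
    (fun μ hμ => by
      rw [← NNReal.coe_lt_coe, Real.coe_toNNReal _ hr0.le]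
      exact hrspec μ hμ)
    (Real.toNNReal_pos.2 hr0)
  rw [Real.coe_toNNReal _ hr0.le] at hK
  have hmapk : ∀ k : ℕ, (B.map (algebraMap ℝ ℂ)) ^ k = (B ^ k).map (algebraMap ℝ ℂ) := by
    intro k
    rw [← RingHom.mapMatrix_apply, ← RingHom.mapMatrix_apply, map_pow]
  have hEnt : ∀ k ≥ K, ∀ i j, |(B ^ k) i j| ≤ r ^ k := by
    intro k hk i j
    have h1 := hK k hk i j
    rw [hmapk k, Matrix.map_apply] at h1
    simpa [Complex.coe_algebraMap, Complex.norm_real, Real.norm_eq_abs] using h1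
  -- the series
  set u : ℕ → (Fin n → ℝ) := fun k => (1/s)^(k+1) • ((B ^ k) *ᵥ fun _ => (1:ℝ)) with hu
  have hui : ∀ k i, u k i = (1/s)^(k+1) * ∑ j, (B ^ k) i j := by
    intro k i
    simp [hu, mulVec, dotProduct]
  have hu0 : ∀ k i, 0 ≤ u k i := by
    intro k i
    rw [hui]
    have h1 : (0:ℝ) ≤ (1/s)^(k+1) := by positivity
    exact mul_nonneg h1 (Finset.sum_nonneg fun j _ => hBpow k i j)
  have hsumi : ∀ i, Summable fun k => u k i := by
    intro i
    rw [← summable_nat_add_iff K]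
    have hgeo : Summable fun k : ℕ => ((n : ℝ) * r ^ K * (1/s)^(K+1)) * (r/s)^k := by
      refine Summable.mul_left _ (summable_geometric_of_lt_one (by positivity) ?_)
      rw [div_lt_one hs0]; exact hrs
    refine hgeo.of_nonneg_of_le (fun k => hu0 _ i) fun k => ?_
    rw [hui]
    have hb1 : ∑ j, (B ^ (k+K)) i j ≤ (n : ℝ) * r ^ (k+K) := by
      have h2 : ∀ j : Fin n, (B ^ (k+K)) i j ≤ r ^ (k+K) := fun j =>
        (le_abs_self _).trans (hEnt (k+K) (Nat.le_add_left K k) i j)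
      calc ∑ j, (B ^ (k+K)) i j ≤ ∑ _j : Fin n, r ^ (k+K) :=
            Finset.sum_le_sum fun j _ => h2 j
        _ = (n : ℝ) * r ^ (k+K) := by simp [mul_comm]
    have h3 : (0:ℝ) ≤ (1/s)^(k+K+1) := by positivity
    calc (1/s)^(k+K+1) * ∑ j, (B ^ (k+K)) i j ≤ (1/s)^(k+K+1) * ((n:ℝ) * r ^ (k+K)) :=
          mul_le_mul_of_nonneg_left hb1 h3
      _ = ((n : ℝ) * r ^ K * (1/s)^(K+1)) * (r/s)^k := by
          rw [pow_add r k K, div_pow, one_pow]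
          simp only [div_pow, one_pow, pow_add, pow_one]
          field_simp
  have hsum : Summable u := Pi.summable.2 hsumi
  set v : Fin n → ℝ := ∑' k, u k with hv
  have hvi : ∀ i, v i = ∑' k, u k i := by
    intro i
    rw [hv, tsum_apply hsum]
  have hvpos : ∀ i, 0 < v i := by
    intro i
    have h1 : u 0 i = 1/s := by
      rw [hui]
      simp [Matrix.one_apply]
    have h2 : u 0 i ≤ v i := by
      rw [hvi]
      exact Summable.le_tsum (hsumi i) 0 fun j _ => hu0 j i
    rw [h1] at h2
    have : (0:ℝ) < 1/s := by positivity
    linarith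
  -- A *ᵥ v = -1
  set g : ℕ → (Fin n → ℝ) := fun k => (1/s)^k • ((B ^ k) *ᵥ fun _ => (1:ℝ)) with hg
  have hAw : ∀ w : Fin n → ℝ, A *ᵥ w = B *ᵥ w - s • w := by
    intro w
    rw [hBdef, Matrix.add_mulVec, Matrix.smul_mulVec, Matrix.one_mulVec]
    abel
  have hgu : ∀ k, A *ᵥ u k = g (k+1) - g k := by
    intro k
    have e1 : (1/s)^(k+1) * s = (1/s)^k := by
      rw [pow_succ, mul_assoc, one_div_mul_cancel hs0.ne', mul_one]
    have e2 : B *ᵥ ((B ^ k) *ᵥ fun _ => (1:ℝ)) = (B ^ (k+1)) *ᵥ fun _ => (1:ℝ) := by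
      rw [Matrix.mulVec_mulVec, ← pow_succ']
    have e3 : ((1:ℝ)/s)^(k+1) • ((B ^ (k+1)) *ᵥ fun _ => (1:ℝ)) = g (k+1) := rfl
    have e4 : ((1:ℝ)/s)^k • ((B ^ k) *ᵥ fun _ => (1:ℝ)) = g k := rfl
    calc A *ᵥ u k = (1/s)^(k+1) • (A *ᵥ ((B ^ k) *ᵥ fun _ => (1:ℝ))) := by
          rw [hu]; exact Matrix.mulVec_smul _ _ _
      _ = (1/s)^(k+1) • (B *ᵥ ((B ^ k) *ᵥ fun _ => (1:ℝ)))
            - ((1/s)^(k+1) * s) • ((B ^ k) *ᵥ fun _ => (1:ℝ)) := by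
          rw [hAw, smul_sub, smul_smul]
      _ = g (k+1) - g k := by rw [e1, e2, e3, e4]
  have hhs : HasSum (fun k => A *ᵥ u k) (A *ᵥ v) := by
    have hcont : Continuous (Matrix.mulVecLin A : (Fin n → ℝ) →ₗ[ℝ] (Fin n → ℝ)) :=
      LinearMap.continuous_of_finiteDimensional _
    let φ : (Fin n → ℝ) →L[ℝ] (Fin n → ℝ) := ⟨Matrix.mulVecLin A, hcont⟩
    exact hsum.hasSum.mapL φ
  have hg0 : Tendsto g atTop (𝓝 0) := by
    rw [tendsto_pi_nhds]
    intro i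
    have hb : ∀ᶠ k in atTop, ‖g k i‖ ≤ (n : ℝ) * (r/s)^k := by
      rw [eventually_atTop]
      refine ⟨K, fun k hk => ?_⟩
      have h1 : g k i = (1/s)^k * ∑ j, (B ^ k) i j := by
        simp [hg, mulVec, dotProduct]
      rw [h1, Real.norm_eq_abs]
      have h2 : (0:ℝ) ≤ (1/s)^k := by positivity
      have h3 : |∑ j, (B ^ k) i j| ≤ (n:ℝ) * r ^ k := by
        calc |∑ j, (B ^ k) i j| ≤ ∑ j, |(B ^ k) i j| := Finset.abs_sum_le_sum_abs _ _
          _ ≤ ∑ _j : Fin n, r ^ k := Finset.sum_le_sum fun j _ => hEnt k hk i j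
          _ = (n:ℝ) * r ^ k := by simp [mul_comm]
      calc |(1/s)^k * ∑ j, (B ^ k) i j| = (1/s)^k * |∑ j, (B ^ k) i j| := by
            rw [abs_mul, _root_.abs_of_nonneg h2]
        _ ≤ (1/s)^k * ((n:ℝ) * r ^ k) := mul_le_mul_of_nonneg_left h3 h2
        _ = (n:ℝ) * (r/s)^k := by rw [div_pow, one_pow, div_pow]; field_simp
    have hlim : Tendsto (fun k : ℕ => (n : ℝ) * (r/s)^k) atTop (𝓝 0) := by
      have h1 : Tendsto (fun k : ℕ => (r/s)^k) atTop (𝓝 0) :=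
        tendsto_pow_atTop_nhds_zero_of_lt_one (by positivity) (by rw [div_lt_one hs0]; exact hrs)
      simpa using h1.const_mul (n : ℝ)
    exact squeeze_zero_norm' hb hlim
  have hAveq : A *ᵥ v = -(g 0) := by
    have h1 : Tendsto (fun m => ∑ k ∈ Finset.range m, (A *ᵥ u k)) atTop (𝓝 (A *ᵥ v)) :=
      hhs.tendsto_sum_nat
    have h2 : (fun m => ∑ k ∈ Finset.range m, (A *ᵥ u k)) = fun m => g m - g 0 := by
      funext m
      simp_rw [hgu]
      exact Finset.sum_range_sub g m
    rw [h2] at h1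
    have h3 : Tendsto (fun m => g m - g 0) atTop (𝓝 (0 - g 0)) := hg0.sub tendsto_const_nhds
    have h4 := tendsto_nhds_unique h1 h3
    rw [h4, zero_sub]
  refine ⟨v, hvpos, fun i => ?_⟩
  rw [hAveq]
  have hg00 : g 0 = fun _ => (1:ℝ) := by
    rw [hg]
    simp [Matrix.one_mulVec]
  rw [hg00]
  norm_num

lemma backward_dir {n : ℕ} (A : Matrix (Fin n) (Fin n) ℝ) (p : Fin n → ℝ)
    (hp : (Matrix.diagonal p).PosDef)
    (hm : (-(Aᵀ * Matrix.diagonal p + Matrix.diagonal p * A)).PosDef) : Hurwitz A := by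
  intro μ hμ
  set Aℂ := A.map (algebraMap ℝ ℂ) with hAC
  rw [spectrum.mem_iff] at hμ
  have hdet : (algebraMap ℂ (Matrix (Fin n) (Fin n) ℂ) μ - Aℂ).det = 0 := by
    by_contra h
    exact hμ ((Matrix.isUnit_iff_isUnit_det _).2 (Ne.isUnit h))
  obtain ⟨x, hx0, hxeq⟩ := (Matrix.exists_mulVec_eq_zero_iff).2 hdet
  have heig : Aℂ *ᵥ x = μ • x := by
    have h1 : (algebraMap ℂ (Matrix (Fin n) (Fin n) ℂ) μ - Aℂ) *ᵥ x = 0 := hxeq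
    rw [Matrix.sub_mulVec] at h1
    have h2 : algebraMap ℂ (Matrix (Fin n) (Fin n) ℂ) μ *ᵥ x = μ • x := by
      rw [Algebra.algebraMap_eq_smul_one, Matrix.smul_mulVec, Matrix.one_mulVec]
    rw [h2] at h1
    exact (sub_eq_zero.mp h1).symm
  set P := Matrix.diagonal p with hP
  set N := Aᵀ * P + P * A with hN
  set Pℂ := P.map (algebraMap ℝ ℂ) with hPC
  set c := star x ⬝ᵥ (Pℂ *ᵥ x) with hc
  obtain ⟨hcre, hcim⟩ := posdef_complex_quad hp x hx0
  have hNmap : N.map (algebraMap ℝ ℂ) = Aℂᵀ * Pℂ + Pℂ * Aℂ := by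
    rw [hN, ← RingHom.mapMatrix_apply, map_add, _root_.map_mul ((algebraMap ℝ ℂ).mapMatrix),
      _root_.map_mul ((algebraMap ℝ ℂ).mapMatrix)]
    simp only [RingHom.mapMatrix_apply]
    rw [Matrix.transpose_map]
  have hstar : Aℂ *ᵥ star x = star (Aℂ *ᵥ x) := by
    funext i
    simp only [mulVec, dotProduct, Pi.star_apply, RCLike.star_def, hAC, map_apply]
    rw [map_sum]
    exact Finset.sum_congr rfl fun j _ => by
      simp [_root_.map_mul, Complex.coe_algebraMap, Complex.conj_ofReal]
  have term1 : star x ⬝ᵥ ((Aℂᵀ * Pℂ) *ᵥ x) = (starRingEnd ℂ) μ * c := by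
    rw [← Matrix.mulVec_mulVec, Matrix.dotProduct_mulVec, Matrix.vecMul_transpose, hstar, heig,
      star_smul]
    rw [smul_dotProduct]
    simp [hc, RCLike.star_def]
  have term2 : star x ⬝ᵥ ((Pℂ * Aℂ) *ᵥ x) = μ * c := by
    rw [← Matrix.mulVec_mulVec, heig, Matrix.mulVec_smul, dotProduct_smul]
    simp [hc]
  have hq : star x ⬝ᵥ ((N.map (algebraMap ℝ ℂ)) *ᵥ x) = ((starRingEnd ℂ) μ + μ) * c := by
    rw [hNmap, Matrix.add_mulVec, dotProduct_add, term1, term2, add_mul]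
  obtain ⟨hmre, _⟩ := posdef_complex_quad hm x hx0
  have hneg : ((-N).map (algebraMap ℝ ℂ)) = -(N.map (algebraMap ℝ ℂ)) := by
    ext i j; simp [map_apply]
  rw [hneg, Matrix.neg_mulVec, dotProduct_neg, Complex.neg_re, hq] at hmre
  have hqre : (((starRingEnd ℂ) μ + μ) * c).re = 2 * μ.re * c.re := by
    rw [Complex.mul_re, Complex.add_re, Complex.add_im, Complex.conj_re, Complex.conj_im, hcim]
    ring
  rw [hqre] at hmre
  nlinarith

end Helpers

theorem stmt16 {n : ℕ} (A : Matrix (Fin n) (Fin n) ℝ) (hA : Metzler A) :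
    Hurwitz A ↔ ∃ p : Fin n → ℝ,
      (Matrix.diagonal p).PosDef ∧
        (-(Aᵀ * Matrix.diagonal p + Matrix.diagonal p * A)).PosDef := by
  constructor
  · intro hH
    obtain ⟨v, hv, hAv⟩ := exists_pos_mulVec_neg A hA hH
    have hAT : Metzler Aᵀ := fun i j hij => hA j i (Ne.symm hij)
    have hHT : Hurwitz Aᵀ := by
      intro μ hμ
      apply hH μ
      rw [spectrum.mem_iff] at hμ ⊢
      intro hunit
      apply hμ
      have heq : algebraMap ℂ (Matrix (Fin n) (Fin n) ℂ) μ - Aᵀ.map (algebraMap ℝ ℂ)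
          = (algebraMap ℂ (Matrix (Fin n) (Fin n) ℂ) μ - A.map (algebraMap ℝ ℂ))ᵀ := by
        rw [Matrix.transpose_sub, Matrix.transpose_map]
        congr 1
        ext i j
        rcases eq_or_ne i j with rfl | hij
        · simp [Matrix.algebraMap_matrix_apply]
        · simp [Matrix.algebraMap_matrix_apply, hij, Ne.symm hij]
      rw [Matrix.isUnit_iff_isUnit_det, heq, Matrix.det_transpose,
        ← Matrix.isUnit_iff_isUnit_det]
      exact hunit
    obtain ⟨u, hu, hATu⟩ := exists_pos_mulVec_neg Aᵀ hAT hHT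
    set p : Fin n → ℝ := fun i => u i / v i with hp
    have hppos : ∀ i, 0 < p i := fun i => div_pos (hu i) (hv i)
    refine ⟨p, Matrix.PosDef.diagonal hppos, ?_⟩
    set S := Aᵀ * Matrix.diagonal p + Matrix.diagonal p * A with hS
    have hsymS : Sᵀ = S := by
      rw [hS, Matrix.transpose_add, Matrix.transpose_mul, Matrix.transpose_mul,
        Matrix.transpose_transpose, Matrix.diagonal_transpose]
      exact add_comm _ _
    have hoffS : ∀ i j, i ≠ j → 0 ≤ S i j := by
      intro i j hij
      rw [hS, Matrix.add_apply, Matrix.mul_diagonal, Matrix.diagonal_mul]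
      have h1 : 0 ≤ Aᵀ i j := hA j i (Ne.symm hij)
      have h2 : 0 ≤ A i j := hA i j hij
      have h3 := (hppos i).le
      have h4 := (hppos j).le
      positivity
    have hPv : Matrix.diagonal p *ᵥ v = u := by
      funext j
      rw [Matrix.mulVec_diagonal, hp]
      exact div_mul_cancel₀ (u j) (hv j).ne'
    have hSv : ∀ i, (S *ᵥ v) i < 0 := by
      intro i
      rw [hS, Matrix.add_mulVec, Pi.add_apply, ← Matrix.mulVec_mulVec, ← Matrix.mulVec_mulVec,
        hPv]
      have h1 : (Aᵀ *ᵥ u) i < 0 := hATu i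
      have h2 : (Matrix.diagonal p *ᵥ (A *ᵥ v)) i < 0 := by
        rw [Matrix.mulVec_diagonal]
        exact mul_neg_of_pos_of_neg (hppos i) (hAv i)
      linarith
    rw [Matrix.posDef_iff_dotProduct_mulVec]
    constructor
    · show (-S)ᴴ = -S
      ext i j
      simp only [Matrix.conjTranspose_apply, Matrix.neg_apply, star_trivial, star_neg]
      have h5 := congrFun (congrFun hsymS j) i
      rw [Matrix.transpose_apply] at h5
      exact congrArg Neg.neg h5.symm
    · intro x hx
      have h1 : star x = x := by
        funext i
        simp
      rw [Matrix.neg_mulVec, h1, dotProduct_neg]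
      have h2 := quadform_neg S hsymS hoffS v hv hSv x hx
      simpa using neg_pos.2 h2
  · rintro ⟨p, hp, hm⟩
    exact backward_dir A p hp hm
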